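/- Let K ⊆ L be number fields, p a prime number, and n ≥ 1. Then Σ_{m=1}^{n} m·N_{p^m}(L) ≤ [L:K] · Σ_{m=1}^{n} m·N_{p^m}(K). -/

import Mathlib

open NumberField Filter Topology
open scoped Classical

noncomputable section

/-- Number of nonzero integral ideals of `𝓞 K` with absolute norm `n`. -/
def idealCount (K : Type*) [Field K] [NumberField K] (n : ℕ) : ℕ :=
  Nat.card {I : Ideal (𝓞 K) // Ideal.absNorm I = n}

/-- The Dedekind zeta function of a number field `K`, defined as the (unique) meromorphic
continuation of the Dirichlet series `∑ 1/(N 𝔞)^s`, if it exists (else junk value `0`). -/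
def dedekindZeta (K : Type*) [Field K] [NumberField K] : ℂ → ℂ :=
  if h : ∃ f : ℂ → ℂ, (∀ s : ℂ, s ≠ 1 → DifferentiableAt ℂ f s) ∧
      ∀ s : ℂ, 1 < s.re → f s = LSeries (fun n => (idealCount K n : ℂ)) s
  then h.choose else 0

/-- The residue `ρ_K` of the Dedekind zeta function at `s = 1` (a real number). -/
def zetaResidue (K : Type*) [Field K] [NumberField K] : ℝ :=
  (limUnder (𝓝[≠] (1 : ℂ)) (fun s => (s - 1) * _root_.dedekindZeta K s)).re

/-- The Euler-Kronecker constant `γ_K` of a number field `K`. -/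
def eulerKronecker (K : Type*) [Field K] [NumberField K] : ℝ :=
  (limUnder (𝓝[≠] (1 : ℂ))
    (fun s => deriv (_root_.dedekindZeta K) s / _root_.dedekindZeta K s + 1 / (s - 1))).re

/-- `Z_K(s) = -1/(s-1) - ζ_K'(s)/ζ_K(s)`. -/
def ZK (K : Type*) [Field K] [NumberField K] (s : ℂ) : ℂ :=
  -1 / (s - 1) - deriv (_root_.dedekindZeta K) s / _root_.dedekindZeta K s

/-- The genus `g_K = log √|d_K|` of a number field `K`. -/
def genus (K : Type*) [Field K] [NumberField K] : ℝ :=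
  Real.log |(discr K : ℝ)| / 2

/-- `N_q(K)`: the number of nonzero prime ideals of `𝓞 K` of absolute norm `q`. -/
def Nq (K : Type*) [Field K] [NumberField K] (q : ℕ) : ℕ :=
  Nat.card {P : Ideal (𝓞 K) // P.IsPrime ∧ P ≠ ⊥ ∧ Ideal.absNorm P = q}

/-- The order of vanishing of `f` at `z` (junk value `0` if `f` is not analytic at `z`,
or vanishes to infinite order). -/
def zeroOrder (f : ℂ → ℂ) (z : ℂ) : ℕ :=
  if h : AnalyticAt ℂ f z then (analyticOrderAt f z).toNat else 0

/-- Sum of `F ρ` over the nontrivial zeros `ρ` of `ζ_K` with `|Im ρ| ≤ T`,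
counted with multiplicity. -/
def zeroSumTrunc (K : Type*) [Field K] [NumberField K] (F : ℂ → ℂ) (T : ℝ) : ℂ :=
  ∑' ρ : {ρ : ℂ // 0 < ρ.re ∧ ρ.re < 1 ∧ _root_.dedekindZeta K ρ = 0 ∧ |ρ.im| ≤ T},
    (zeroOrder (_root_.dedekindZeta K) ρ : ℂ) * F ρ

/-- `N_K(T)`: the number of nontrivial zeros `ρ` of `ζ_K` with `|Im ρ| < T`,
counted with multiplicity. -/
def NKzeros (K : Type*) [Field K] [NumberField K] (T : ℝ) : ℝ :=
  ∑' ρ : {ρ : ℂ // 0 < ρ.re ∧ ρ.re < 1 ∧ _root_.dedekindZeta K ρ = 0 ∧ |ρ.im| < T},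
    (zeroOrder (_root_.dedekindZeta K) ρ : ℝ)

/-- A number field is almost normal if there is a tower of subfields
`ℚ = K₁ ⊂ K₂ ⊂ ⋯ ⊂ Kₙ = K` with each step Galois. -/
def AlmostNormal (K : Type*) [Field K] : Prop :=
  ∃ (n : ℕ) (F : Fin (n + 1) → Subfield K) (hmono : ∀ i : Fin n, F i.castSucc ≤ F i.succ),
    F 0 = ⊥ ∧ F (Fin.last n) = ⊤ ∧
      ∀ i : Fin n,
        letI := (Subfield.inclusion (hmono i)).toAlgebra
        IsGalois (F i.castSucc) (F i.succ)

/-- `K` contains no quadratic subfield. -/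
def NoQuadraticSubfield (K : Type*) [Field K] [CharZero K] : Prop :=
  ¬ ∃ N : Subfield K, Module.finrank ℚ N = 2

end



section SumMulNqAux

open Ideal Module

variable (p n : ℕ)

private lemma primesT_finite (F : Type*) [Field F] [NumberField F] :
    {P : Ideal (𝓞 F) | P.IsPrime ∧ P ≠ ⊥ ∧
      ∃ m ∈ Finset.Icc 1 n, Ideal.absNorm P = p ^ m}.Finite := by
  refine Set.Finite.subset (Set.Finite.biUnion (Finset.finite_toSet (Finset.Icc 1 n))
    (fun m _ => Ideal.finite_setOf_absNorm_eq (p ^ m))) ?_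
  rintro P ⟨-, -, m, hm, hPm⟩
  exact Set.mem_biUnion hm hPm

/-- The finite set of nonzero primes of `𝓞 F` of norm `p ^ m` with `1 ≤ m ≤ n`. -/
private noncomputable def primesT (F : Type*) [Field F] [NumberField F] : Finset (Ideal (𝓞 F)) :=
  (primesT_finite p n F).toFinset

private lemma mem_primesT {F : Type*} [Field F] [NumberField F] {P : Ideal (𝓞 F)} :
    P ∈ primesT p n F ↔ P.IsPrime ∧ P ≠ ⊥ ∧
      ∃ m ∈ Finset.Icc 1 n, Ideal.absNorm P = p ^ m :=
  (primesT_finite p n F).mem_toFinset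

private lemma fact_pow_self {m : ℕ} (hp : p.Prime) : (p ^ m).factorization p = m := by
  rw [hp.factorization_pow, Finsupp.single_eq_same]

private lemma sum_Nq_eq (hp : p.Prime) (F : Type*) [Field F] [NumberField F] :
    ∑ m ∈ Finset.Icc 1 n, m * Nq F (p ^ m)
      = ∑ P ∈ primesT p n F, (Ideal.absNorm P).factorization p := by
  rw [← Finset.sum_fiberwise_of_maps_to (t := Finset.Icc 1 n)
      (g := fun P : Ideal (𝓞 F) => (Ideal.absNorm P).factorization p)
      (fun P hP => by
        obtain ⟨-, -, m, hm, hPm⟩ := (mem_primesT p n).1 hP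
        show (Ideal.absNorm P).factorization p ∈ Finset.Icc 1 n
        rwa [hPm, fact_pow_self p hp])]
  refine Finset.sum_congr rfl fun m hm => ?_
  have hfin : {P : Ideal (𝓞 F) | P.IsPrime ∧ P ≠ ⊥ ∧ Ideal.absNorm P = p ^ m}.Finite :=
    (Ideal.finite_setOf_absNorm_eq (p ^ m)).subset (fun P hP => hP.2.2)
  have hset : (primesT p n F).filter
      (fun P => (Ideal.absNorm P).factorization p = m) = hfin.toFinset := by
    ext P
    rw [Finset.mem_filter, mem_primesT, hfin.mem_toFinset]
    constructor
    · rintro ⟨⟨h1, h2, m', hm', hPm'⟩, hw⟩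
      rw [hPm', fact_pow_self p hp] at hw
      exact ⟨h1, h2, by rw [hPm', hw]⟩
    · rintro ⟨h1, h2, h3⟩
      exact ⟨⟨h1, h2, m, hm, h3⟩, by rw [h3, fact_pow_self p hp]⟩
  have hNq : Nq F (p ^ m) = hfin.toFinset.card := by
    calc Nq F (p ^ m)
        = Nat.card {P : Ideal (𝓞 F) | P.IsPrime ∧ P ≠ ⊥ ∧ Ideal.absNorm P = p ^ m} := rfl
      _ = hfin.toFinset.card := by
          rw [Nat.card_coe_set_eq, Set.ncard_eq_toFinset_card _ hfin]
  rw [hNq, hset, Finset.sum_congr rfl (fun P hP => show (Ideal.absNorm P).factorization p = m by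
      rw [(hfin.mem_toFinset.1 hP).2.2, fact_pow_self p hp]),
    Finset.sum_const, smul_eq_mul, mul_comm]

variable (K L : Type) [Field K] [Field L] [NumberField K] [NumberField L] [Algebra K L]

set_option synthInstance.maxHeartbeats 1000000 in
/-- `N(P) = N(q) ^ f(P/q)` for a nonzero prime `P` lying over `q`. -/
private lemma absNorm_eq_pow_inertiaDeg (P : Ideal (𝓞 L)) [P.IsPrime] (hP0 : P ≠ ⊥)
    (q : Ideal (𝓞 K)) [q.IsMaximal] [P.LiesOver q] (hq0 : q ≠ ⊥) :
    Ideal.absNorm P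
      = Ideal.absNorm q ^ Ideal.inertiaDeg' q P := by
  rw [Ideal.inertiaDeg'_algebraMap]
  letI : Fintype (𝓞 L ⧸ P) := 
    haveI := Ideal.finiteQuotientOfFreeOfNeBot _ hP0; Fintype.ofFinite _
  letI : Fintype (𝓞 K ⧸ q) := 
    haveI := Ideal.finiteQuotientOfFreeOfNeBot _ hq0; Fintype.ofFinite _
  letI : Field (𝓞 K ⧸ q) := Ideal.Quotient.field q
  rw [Ideal.absNorm_apply, Ideal.absNorm_apply, Submodule.cardQuot_apply,
    Submodule.cardQuot_apply, Nat.card_eq_fintype_card, Nat.card_eq_fintype_card]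
  exact card_eq_pow_finrank

private lemma comap_mem_and_eq (hp : p.Prime) {P : Ideal (𝓞 L)} (hP : P ∈ primesT p n L) :
    P.comap (algebraMap (𝓞 K) (𝓞 L)) ∈ primesT p n K ∧
    (Ideal.absNorm P).factorization p
      = (Ideal.absNorm (P.comap (algebraMap (𝓞 K) (𝓞 L)))).factorization p
        * Ideal.inertiaDeg' (P.comap (algebraMap (𝓞 K) (𝓞 L))) P := by
  obtain ⟨hPp, hP0, m, hm, hPm⟩ := (mem_primesT p n).1 hP
  haveI := hPp
  set q : Ideal (𝓞 K) := P.comap (algebraMap (𝓞 K) (𝓞 L)) with hqdef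
  haveI hqp : q.IsPrime := hPp.comap _
  have hq0 : q ≠ ⊥ := fun h => hP0 (Ideal.eq_bot_of_comap_eq_bot h)
  haveI : q.IsMaximal := hqp.isMaximal hq0
  haveI : P.LiesOver q := ⟨rfl⟩
  have hfd : 0 < Ideal.inertiaDeg' q P := Ideal.inertiaDeg'_pos q P
  have habs : Ideal.absNorm P
      = Ideal.absNorm q ^ Ideal.inertiaDeg' q P :=
    absNorm_eq_pow_inertiaDeg K L P hP0 q hq0
  have hdvd : Ideal.absNorm q ∣ p ^ m := by
    rw [← hPm, habs]; exact dvd_pow_self _ hfd.ne'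
  obtain ⟨k, hkm, hqk⟩ := (Nat.dvd_prime_pow hp).1 hdvd
  have hk1 : 1 ≤ k := by
    rcases Nat.eq_zero_or_pos k with h0 | h
    · exfalso
      rw [h0, pow_zero] at hqk
      exact hqp.ne_top (Ideal.absNorm_eq_one_iff.1 hqk)
    · exact h
  refine ⟨(mem_primesT p n).2 ⟨hqp, hq0, k, Finset.mem_Icc.mpr
      ⟨hk1, le_trans hkm (Finset.mem_Icc.mp hm).2⟩, hqk⟩, ?_⟩
  rw [habs, hqk, ← pow_mul, fact_pow_self p hp, fact_pow_self p hp]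

end SumMulNqAux

/-- For number fields `K ⊆ L`, a prime `p` and `n ≥ 1`,
`∑_{m=1}^n m · N_{p^m}(L) ≤ [L:K] · ∑_{m=1}^n m · N_{p^m}(K)`. -/
theorem sum_mul_Nq_le
    (K L : Type) [Field K] [Field L] [NumberField K] [NumberField L] [Algebra K L]
    (p : ℕ) (hp : p.Prime) (n : ℕ) (hn : 1 ≤ n) :
    ∑ m ∈ Finset.Icc 1 n, m * Nq L (p ^ m) ≤
      Module.finrank K L * ∑ m ∈ Finset.Icc 1 n, m * Nq K (p ^ m) := by
  classical
  have hinj : Function.Injective (algebraMap (𝓞 K) (𝓞 L)) :=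
    (RingHom.injective_iff_ker_eq_bot _).mpr (NumberField.RingOfIntegers.ker_algebraMap_eq_bot K L)
  rw [sum_Nq_eq p n hp L, sum_Nq_eq p n hp K, Finset.mul_sum,
    ← Finset.sum_fiberwise_of_maps_to (t := primesT p n K)
      (g := fun P : Ideal (𝓞 L) => P.comap (algebraMap (𝓞 K) (𝓞 L)))
      (fun P hP => (comap_mem_and_eq p n K L hp hP).1)]
  refine Finset.sum_le_sum fun q hq => ?_
  obtain ⟨hqp, hq0, k, hk, hqk⟩ := (mem_primesT p n).1 hq
  haveI := hqp
  haveI : q.IsMaximal := hqp.isMaximal hq0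
  have hmapne : Ideal.map (algebraMap (𝓞 K) (𝓞 L)) q ≠ ⊥ := by
    rw [Ne, Ideal.map_eq_bot_iff_of_injective hinj]; exact hq0
  calc ∑ P ∈ (primesT p n L).filter
        (fun P => P.comap (algebraMap (𝓞 K) (𝓞 L)) = q), (Ideal.absNorm P).factorization p
      = ∑ P ∈ (primesT p n L).filter
          (fun P => P.comap (algebraMap (𝓞 K) (𝓞 L)) = q),
          (Ideal.absNorm q).factorization p
            * Ideal.inertiaDeg' q P := by
        refine Finset.sum_congr rfl fun P hP => ?_
        obtain ⟨hP1, hP2⟩ := Finset.mem_filter.1 hP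
        rw [(comap_mem_and_eq p n K L hp hP1).2, hP2]
    _ ≤ ∑ P ∈ (UniqueFactorizationMonoid.factors
          (Ideal.map (algebraMap (𝓞 K) (𝓞 L)) q)).toFinset,
          (Ideal.absNorm q).factorization p
            * Ideal.inertiaDeg' q P := by
        refine Finset.sum_le_sum_of_subset fun P hP => ?_
        obtain ⟨hP1, hP2⟩ := Finset.mem_filter.1 hP
        obtain ⟨hPp, hP0, -⟩ := (mem_primesT p n).1 hP1
        have hprime : Prime P := Ideal.prime_of_isPrime hP0 hPp
        have hdvd : P ∣ Ideal.map (algebraMap (𝓞 K) (𝓞 L)) q := by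
          rw [Ideal.dvd_iff_le, Ideal.map_le_iff_le_comap, hP2]
        obtain ⟨Q, hQ, hassoc⟩ :=
          UniqueFactorizationMonoid.exists_mem_factors_of_dvd hmapne hprime.irreducible hdvd
        exact Multiset.mem_toFinset.mpr (associated_iff_eq.mp hassoc ▸ hQ)
    _ ≤ ∑ P ∈ (UniqueFactorizationMonoid.factors
          (Ideal.map (algebraMap (𝓞 K) (𝓞 L)) q)).toFinset,
          (Ideal.absNorm q).factorization p
            * (Ideal.ramificationIdx' q P
              * Ideal.inertiaDeg' q P) := by
        refine Finset.sum_le_sum fun P hP => Nat.mul_le_mul_left _ ?_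
        rw [Multiset.mem_toFinset] at hP
        have hPp : P.IsPrime := Ideal.isPrime_of_prime
          (UniqueFactorizationMonoid.prime_of_factor _ hP)
        have hle : Ideal.map (algebraMap (𝓞 K) (𝓞 L)) q ≤ P :=
          Ideal.dvd_iff_le.mp (UniqueFactorizationMonoid.dvd_of_mem_factors hP)
        exact Nat.le_mul_of_pos_left _
          (Nat.pos_of_ne_zero (Ideal.IsDedekindDomain.ramificationIdx'_ne_zero hmapne hPp hle))
    _ = (Ideal.absNorm q).factorization p
          * ∑ P ∈ (UniqueFactorizationMonoid.factors
            (Ideal.map (algebraMap (𝓞 K) (𝓞 L)) q)).toFinset,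
            Ideal.ramificationIdx' q P
              * Ideal.inertiaDeg' q P := by
        rw [Finset.mul_sum]
    _ = (Ideal.absNorm q).factorization p * Module.finrank K L := by
        rw [Ideal.sum_ramification_inertia (𝓞 L) K L hq0]
    _ = Module.finrank K L * (Ideal.absNorm q).factorization p := mul_comm _ _
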